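/- Every connected Tait-colored cubic graph can be reduced to a 1-patch graph (one whose three patch numbers are all 1, i.e., each pair of colors forms a single cycle) by a finite sequence of p-compressions (compressions along connecting edges). -/

import Mathlib

/-- A Tait-colored cubic graph (multigraphs allowed), encoded by three
fixed-point-free involutions on the vertex set, one for each color `c : Fin 3`:
`mat c` matches every vertex to the other endpoint of its unique edge of color `c`. -/
structure TaitGraph (V : Type) where
  mat : Fin 3 → V → V
  invol : ∀ c v, mat c (mat c v) = v
  nofix : ∀ c v, mat c v ≠ v

namespace TaitGraph

variable {V V' : Type}

/-- Two vertices lie on the same bi-colored cycle of the two colors other than `c`. -/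
def Conn (Γ : TaitGraph V) (c : Fin 3) : V → V → Prop :=
  Relation.ReflTransGen (fun x y => ∃ c', c' ≠ c ∧ Γ.mat c' x = y)

/-- The patch number for the pair of colors other than `c`: the number of
bi-colored cycles of those two colors. -/
noncomputable def patches (Γ : TaitGraph V) (c : Fin 3) : ℕ :=
  Nat.card (Quot (Γ.Conn c))

def OnePatch (Γ : TaitGraph V) : Prop := ∀ c, Γ.patches c = 1

def Bipartite (Γ : TaitGraph V) : Prop :=
  ∃ s : V → Bool, ∀ c v, s (Γ.mat c v) = !s v

def Connected (Γ : TaitGraph V) : Prop :=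
  Nonempty V ∧ ∀ x y : V, Relation.ReflTransGen (fun a b => ∃ c, Γ.mat c a = b) x y

/-- The number of edges: for each color, the edges of that color are the orbits
of the corresponding involution. -/
noncomputable def edgeCount (Γ : TaitGraph V) : ℕ :=
  ∑ c : Fin 3, Nat.card (Quot (fun x y : V => Γ.mat c x = y))

/-- Euler characteristic of the induced surface, computed from its CW structure:
vertices minus edges plus 2-cells (one 2-cell per bi-colored cycle). -/
noncomputable def chiS (Γ : TaitGraph V) : ℤ :=
  (Nat.card V : ℤ) - (Γ.edgeCount : ℤ) + (∑ c : Fin 3, (Γ.patches c : ℤ))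

/-- The edge of color `c` at `v` is orientation-reversing: its endpoints lie on the same
bi-colored cycle of the other two colors and receive the same sign in any alternating
`±`-labeling of the bi-colored cycles. -/
def OrientationReversing (Γ : TaitGraph V) (c : Fin 3) (v : V) : Prop :=
  Γ.Conn c v (Γ.mat c v) ∧
    ∀ s : V → Bool, (∀ c' v', c' ≠ c → s (Γ.mat c' v') = !s v') → s (Γ.mat c v) = s v

/-- The edge of color `c` at `v` is orientation-preserving: its endpoints lie on the same
bi-colored cycle of the other two colors and receive opposite signs in any alternating
`±`-labeling of the bi-colored cycles. -/
def OrientationPreserving (Γ : TaitGraph V) (c : Fin 3) (v : V) : Prop :=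
  Γ.Conn c v (Γ.mat c v) ∧
    ∀ s : V → Bool, (∀ c' v', c' ≠ c → s (Γ.mat c' v') = !s v') → s (Γ.mat c v) = !s v

/-- `Γ'` is the compression of `Γ` along the (non-parallel) edge of color `c` with
endpoints `v` and `Γ.mat c v`: delete the edge and its endpoints, and for each of the
other two colors merge the two deleted-vertex edges into a single edge. -/
def IsCompression (Γ : TaitGraph V) (c : Fin 3) (v : V) (Γ' : TaitGraph V') : Prop :=
  ∃ φ : V' ≃ {w : V // w ≠ v ∧ w ≠ Γ.mat c v},
    (∀ w : V', ((φ (Γ'.mat c w) : V)) = Γ.mat c ((φ w : V))) ∧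
    ∀ c' : Fin 3, c' ≠ c → ∀ w : V',
      (Γ.mat c' ((φ w : V)) = v ∧ ((φ (Γ'.mat c' w) : V)) = Γ.mat c' (Γ.mat c v)) ∨
      (Γ.mat c' ((φ w : V)) = Γ.mat c v ∧ ((φ (Γ'.mat c' w) : V)) = Γ.mat c' v) ∨
      (Γ.mat c' ((φ w : V)) ≠ v ∧ Γ.mat c' ((φ w : V)) ≠ Γ.mat c v ∧
        ((φ (Γ'.mat c' w) : V)) = Γ.mat c' ((φ w : V)))

end TaitGraph

/-- Bundled finite Tait-colored cubic graphs. -/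
def TG : Type := Σ n : ℕ, TaitGraph (Fin n)

/-- `Y` is obtained from `X` by a p-compression: compression along a connecting edge
(one whose endpoints lie on distinct bi-colored cycles of the opposite two colors). -/
def PComp (X Y : TG) : Prop :=
  ∃ (c : Fin 3) (v : Fin X.1),
    ¬ X.2.Conn c v (X.2.mat c v) ∧ X.2.IsCompression c v Y.2

/-- `Y` is obtained from `X` by a t-compression: compression along a non-parallel
orientation-preserving edge. -/
def TComp (X Y : TG) : Prop :=
  ∃ (c : Fin 3) (v : Fin X.1),
    X.2.OrientationPreserving c v ∧
    (∀ c' : Fin 3, c' ≠ c → X.2.mat c' v ≠ X.2.mat c v) ∧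
    X.2.IsCompression c v Y.2

/-- `Y` is obtained from `X` by a c-compression: compression along an
orientation-reversing edge. -/
def CComp (X Y : TG) : Prop :=
  ∃ (c : Fin 3) (v : Fin X.1),
    X.2.OrientationReversing c v ∧ X.2.IsCompression c v Y.2

/-- The theta graph: two vertices joined by three edges, one of each color.  (Any
Tait-colored cubic graph on two vertices is the theta graph.) -/
def IsTheta (X : TG) : Prop := X.1 = 2

section AuxLemmas

open Relation

/-- A finite set closed under a fixed-point-free involution has even cardinality. -/
lemma even_card_of_invol {α : Type} [DecidableEq α] (f : α → α) :
    ∀ s : Finset α, (∀ x ∈ s, f x ∈ s) → (∀ x ∈ s, f (f x) = x) →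
      (∀ x ∈ s, f x ≠ x) → Even s.card := by
  intro s
  induction s using Finset.strongInduction with
  | _ s ih =>
    intro hmaps hinv hne
    rcases s.eq_empty_or_nonempty with rfl | ⟨x, hx⟩
    · simp
    · have hfx : f x ∈ s := hmaps x hx
      have hfxx : f x ≠ x := hne x hx
      set t := (s.erase x).erase (f x) with ht
      have htmem : ∀ y, y ∈ t ↔ y ∈ s ∧ y ≠ x ∧ y ≠ f x := by
        intro y
        constructor
        · intro hy
          have h1 := Finset.mem_of_mem_erase hy
          exact ⟨Finset.mem_of_mem_erase h1, Finset.ne_of_mem_erase h1,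
            Finset.ne_of_mem_erase hy⟩
        · rintro ⟨h1, h2, h3⟩
          exact Finset.mem_erase.mpr ⟨h3, Finset.mem_erase.mpr ⟨h2, h1⟩⟩
      have hsub : t ⊂ s := by
        constructor
        · intro y hy; exact ((htmem y).mp hy).1
        · intro hcon
          have := (htmem x).mp (hcon hx)
          exact this.2.1 rfl
      have heven : Even t.card := by
        apply ih t hsub
        · intro y hy
          obtain ⟨hys, hyx, hyfx⟩ := (htmem y).mp hy
          have h1 : f y ∈ s := hmaps y hys
          have h2 : f y ≠ f x := by
            intro he
            exact hyx (by rw [← hinv y hys, he, hinv x hx])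
          have h3 : f y ≠ x := by
            intro he
            exact hyfx (by rw [← he, hinv y hys])
          exact (htmem (f y)).mpr ⟨h1, h3, h2⟩
        · intro y hy; exact hinv y ((htmem y).mp hy).1
        · intro y hy; exact hne y ((htmem y).mp hy).1
      have hc1 : t.card + 1 = (s.erase x).card :=
        Finset.card_erase_add_one (Finset.mem_erase.mpr ⟨hfxx, hfx⟩)
      have hc2 : (s.erase x).card + 1 = s.card := Finset.card_erase_add_one hx
      obtain ⟨k, hk⟩ := heven
      exact ⟨k + 1, by omega⟩

/-- Going around a bi-colored cycle: the two neighbours of `p` on the cycle of the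
two involutions `f` and `g` can be joined by a path avoiding `p`. -/
lemma cycle_around {α : Type} [Fintype α] [DecidableEq α] (f g : α → α)
    (hf : ∀ x, f (f x) = x) (hg : ∀ x, g (g x) = x)
    (hf' : ∀ x, f x ≠ x) (hg' : ∀ x, g x ≠ x) (p : α) :
    Relation.ReflTransGen (fun x y => (f x = y ∨ g x = y) ∧ x ≠ p ∧ y ≠ p) (f p) (g p) := by
  classical
  set S : α → α → Prop := fun x y => (f x = y ∨ g x = y) ∧ x ≠ p ∧ y ≠ p with hS
  by_contra hcon
  set A : Finset α := Finset.univ.filter (fun x => Relation.ReflTransGen S (f p) x) with hA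
  have hmemA : ∀ x, x ∈ A ↔ Relation.ReflTransGen S (f p) x := by
    intro x; simp [hA]
  have hpA : p ∉ A := by
    rw [hmemA]
    intro hr
    rcases Relation.ReflTransGen.cases_tail hr with he | ⟨w, _, hw⟩
    · exact hf' p he.symm
    · exact hw.2.2 rfl
  have hnep : ∀ x ∈ A, x ≠ p := fun x hx he => hpA (he ▸ hx)
  have hfpA : f p ∈ A := (hmemA _).mpr .refl
  have hgpA : g p ∉ A := fun h => hcon ((hmemA _).mp h)
  -- g is a fixed-point-free involution on A
  have hgA : ∀ x ∈ A, g x ∈ A := by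
    intro x hx
    have hgxp : g x ≠ p := by
      intro he
      have : x = g p := by rw [← hg x, he]
      exact hgpA (this ▸ hx)
    exact (hmemA _).mpr (((hmemA x).mp hx).tail ⟨Or.inr rfl, hnep x hx, hgxp⟩)
  have hevenA : Even A.card :=
    even_card_of_invol g A hgA (fun x _ => hg x) (fun x _ => hg' x)
  -- f is a fixed-point-free involution on A.erase (f p)
  have hevenB : Even ((A.erase (f p)).card) := by
    apply even_card_of_invol f
    · intro x hx
      obtain ⟨hxfp, hxA⟩ := Finset.mem_erase.mp hx
      have hfxp : f x ≠ p := by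
        intro he
        exact hxfp (by rw [← hf x, he])
      have hfxA : f x ∈ A :=
        (hmemA _).mpr (((hmemA x).mp hxA).tail ⟨Or.inl rfl, hnep x hxA, hfxp⟩)
      refine Finset.mem_erase.mpr ⟨?_, hfxA⟩
      intro he
      have : x = p := by rw [← hf x, he, hf]
      exact hnep x hxA this
    · intro x _; exact hf x
    · intro x _; exact hf' x
  have hcard : A.card = (A.erase (f p)).card + 1 := (Finset.card_erase_add_one hfpA).symm
  obtain ⟨k, hk⟩ := hevenA
  obtain ⟨l, hl⟩ := hevenB
  omega

namespace TaitGraph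

variable {V : Type}

lemma mat_inj (Γ : TaitGraph V) (c : Fin 3) {a b : V} (h : Γ.mat c a = Γ.mat c b) : a = b := by
  have h2 := congrArg (Γ.mat c) h
  rwa [Γ.invol, Γ.invol] at h2

lemma conn_symm (Γ : TaitGraph V) {c : Fin 3} {x y : V} (h : Γ.Conn c x y) : Γ.Conn c y x := by
  have hs : Std.Symm (fun x y : V => ∃ c', c' ≠ c ∧ Γ.mat c' x = y) := by
    refine ⟨?_⟩
    rintro a b ⟨c', hc', rfl⟩
    exact ⟨c', hc', Γ.invol c' a⟩
  exact Std.Symm.symm (r := Relation.ReflTransGen (fun x y : V => ∃ c', c' ≠ c ∧ Γ.mat c' x = y)) _ _ h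

lemma conn_step (Γ : TaitGraph V) {c c' : Fin 3} (h : c' ≠ c) (x : V) :
    Γ.Conn c x (Γ.mat c' x) := Relation.ReflTransGen.single ⟨c', h, rfl⟩

section Compress

variable [DecidableEq V] (Γ : TaitGraph V) (c : Fin 3) (v : V)

/-- The matching function on the vertices surviving a compression. -/
def cmat (c' : Fin 3) (w : V) : V :=
  if c' = c then Γ.mat c w
  else if Γ.mat c' w = v then Γ.mat c' (Γ.mat c v)
  else if Γ.mat c' w = Γ.mat c v then Γ.mat c' v
  else Γ.mat c' w

variable {Γ c v}

lemma hpar (hnc : ¬ Γ.Conn c v (Γ.mat c v)) :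
    ∀ c', c' ≠ c → Γ.mat c' v ≠ Γ.mat c v := by
  intro c' hc' he
  exact hnc (he ▸ Γ.conn_step hc' v)

lemma hpar' (hnc : ¬ Γ.Conn c v (Γ.mat c v)) :
    ∀ c', c' ≠ c → Γ.mat c' (Γ.mat c v) ≠ v := by
  intro c' hc' he
  have h2 := congrArg (Γ.mat c') he
  rw [Γ.invol] at h2
  exact hpar hnc c' hc' h2.symm

lemma cmat_mem (hnc : ¬ Γ.Conn c v (Γ.mat c v)) (c' : Fin 3) (w : V)
    (hw1 : w ≠ v) (hw2 : w ≠ Γ.mat c v) :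
    cmat Γ c v c' w ≠ v ∧ cmat Γ c v c' w ≠ Γ.mat c v := by
  unfold cmat
  split_ifs with h1 h2 h3
  · constructor
    · intro he
      apply hw2
      rw [← he, Γ.invol]
    · intro he
      exact hw1 (Γ.mat_inj c he)
  · exact ⟨hpar' hnc c' h1, Γ.nofix c' (Γ.mat c v)⟩
  · exact ⟨Γ.nofix c' v, hpar hnc c' h1⟩
  · exact ⟨h2, h3⟩

lemma cmat_invol (hnc : ¬ Γ.Conn c v (Γ.mat c v)) (c' : Fin 3) (w : V)
    (hw1 : w ≠ v) (hw2 : w ≠ Γ.mat c v) :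
    cmat Γ c v c' (cmat Γ c v c' w) = w := by
  unfold cmat
  by_cases h1 : c' = c
  · simp [h1, Γ.invol]
  · simp only [if_neg h1]
    by_cases h2 : Γ.mat c' w = v
    · rw [if_pos h2]
      have e1 : Γ.mat c' (Γ.mat c' (Γ.mat c v)) = Γ.mat c v := Γ.invol c' _
      rw [if_neg (by rw [e1]; exact fun he => Γ.nofix c v he), if_pos e1]
      have h3 := congrArg (Γ.mat c') h2
      rw [Γ.invol] at h3
      exact h3.symm
    · rw [if_neg h2]
      by_cases h3 : Γ.mat c' w = Γ.mat c v
      · rw [if_pos h3]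
        rw [if_pos (Γ.invol c' v)]
        have h4 := congrArg (Γ.mat c') h3
        rw [Γ.invol] at h4
        exact h4.symm
      · rw [if_neg h3]
        rw [if_neg (by rw [Γ.invol]; exact hw1), if_neg (by rw [Γ.invol]; exact hw2)]
        exact Γ.invol c' w

lemma cmat_ne (c' : Fin 3) (w : V) : cmat Γ c v c' w ≠ w := by
  unfold cmat
  split_ifs with h1 h2 h3
  · exact Γ.nofix c w
  · intro he
    rw [← he, Γ.invol] at h2
    exact Γ.nofix c v h2
  · intro he
    rw [← he, Γ.invol] at h3
    exact Γ.nofix c v h3.symm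
  · exact Γ.nofix c' w

/-- The compression of `Γ` along the connecting edge of color `c` at `v`,
on the subtype of surviving vertices. -/
def compress (hnc : ¬ Γ.Conn c v (Γ.mat c v)) :
    TaitGraph {w : V // w ≠ v ∧ w ≠ Γ.mat c v} where
  mat c' w := ⟨cmat Γ c v c' w.1, cmat_mem hnc c' w.1 w.2.1 w.2.2⟩
  invol c' w := Subtype.ext (cmat_invol hnc c' w.1 w.2.1 w.2.2)
  nofix c' w := fun he => cmat_ne c' w.1 (congrArg Subtype.val he)

lemma compress_isCompression (hnc : ¬ Γ.Conn c v (Γ.mat c v)) :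
    Γ.IsCompression c v (compress hnc) := by
  refine ⟨Equiv.refl _, ?_, ?_⟩
  · intro w
    show cmat Γ c v c w.1 = Γ.mat c w.1
    unfold cmat
    rw [if_pos rfl]
  · intro c' hc' w
    by_cases h2 : Γ.mat c' w.1 = v
    · refine Or.inl ⟨h2, ?_⟩
      show cmat Γ c v c' w.1 = Γ.mat c' (Γ.mat c v)
      unfold cmat
      rw [if_neg hc', if_pos h2]
    · by_cases h3 : Γ.mat c' w.1 = Γ.mat c v
      · refine Or.inr (Or.inl ⟨h3, ?_⟩)
        show cmat Γ c v c' w.1 = Γ.mat c' v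
        unfold cmat
        rw [if_neg hc', if_neg h2, if_pos h3]
      · refine Or.inr (Or.inr ⟨h2, h3, ?_⟩)
        show cmat Γ c v c' w.1 = Γ.mat c' w.1
        unfold cmat
        rw [if_neg hc', if_neg h2, if_neg h3]

end Compress


section Connectivity

variable [DecidableEq V] [Fintype V] {Γ : TaitGraph V} {c : Fin 3} {v : V}

lemma lift_step (hnc : ¬ Γ.Conn c v (Γ.mat c v)) (c'' : Fin 3) (a : V)
    (ha : a ≠ v ∧ a ≠ Γ.mat c v) (hb1 : Γ.mat c'' a ≠ v) (hb2 : Γ.mat c'' a ≠ Γ.mat c v) :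
    (compress hnc).mat c'' ⟨a, ha⟩ = ⟨Γ.mat c'' a, hb1, hb2⟩ := by
  apply Subtype.ext
  show cmat Γ c v c'' a = Γ.mat c'' a
  unfold cmat
  by_cases h1 : c'' = c
  · subst h1; rw [if_pos rfl]
  · rw [if_neg h1, if_neg hb1, if_neg hb2]

lemma conn_around (hnc : ¬ Γ.Conn c v (Γ.mat c v)) (p : V)
    (hz : ∀ z, z ≠ p → Γ.Conn c p z → z ≠ v ∧ z ≠ Γ.mat c v)
    {c₁ c₂ : Fin 3} (h₁ : c₁ ≠ c) (h₂ : c₂ ≠ c)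
    (hm1 : Γ.mat c₁ p ≠ v ∧ Γ.mat c₁ p ≠ Γ.mat c v)
    (hm2 : Γ.mat c₂ p ≠ v ∧ Γ.mat c₂ p ≠ Γ.mat c v) :
    Relation.ReflTransGen (fun a b => ∃ c', (compress hnc).mat c' a = b)
      ⟨Γ.mat c₁ p, hm1⟩ ⟨Γ.mat c₂ p, hm2⟩ := by
  have hcyc := cycle_around (Γ.mat c₁) (Γ.mat c₂) (Γ.invol c₁) (Γ.invol c₂)
    (Γ.nofix c₁) (Γ.nofix c₂) p
  have key : ∀ z, Relation.ReflTransGen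
      (fun x y => (Γ.mat c₁ x = y ∨ Γ.mat c₂ x = y) ∧ x ≠ p ∧ y ≠ p) (Γ.mat c₁ p) z →
      ∃ hmz : z ≠ v ∧ z ≠ Γ.mat c v, Γ.Conn c p z ∧
        Relation.ReflTransGen (fun a b => ∃ c', (compress hnc).mat c' a = b)
          ⟨Γ.mat c₁ p, hm1⟩ ⟨z, hmz⟩ := by
    intro z hr
    induction hr with
    | refl => exact ⟨hm1, Γ.conn_step h₁ p, .refl⟩
    | tail hab hbc ih =>
      rename_i b z'
      obtain ⟨hmb, hconnb, hpath⟩ := ih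
      obtain ⟨hor, hbp, hzp⟩ := hbc
      obtain ⟨c', hc', hcz⟩ : ∃ c', c' ≠ c ∧ Γ.mat c' b = z' := by
        rcases hor with h | h
        · exact ⟨c₁, h₁, h⟩
        · exact ⟨c₂, h₂, h⟩
      have hconnz : Γ.Conn c p z' := hconnb.tail ⟨c', hc', hcz⟩
      have hmz := hz z' hzp hconnz
      refine ⟨hmz, hconnz, hpath.tail ⟨c', ?_⟩⟩
      rw [lift_step hnc c' b hmb (hcz ▸ hmz.1) (hcz ▸ hmz.2)]
      exact Subtype.ext hcz
  obtain ⟨hmz, _, hpath⟩ := key _ hcyc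
  exact hpath

lemma compress_connected (hnc : ¬ Γ.Conn c v (Γ.mat c v)) (hΓ : Γ.Connected) :
    (compress hnc).Connected := by
  obtain ⟨c₁, hc₁⟩ : ∃ c₁ : Fin 3, c₁ ≠ c :=
    if h : c = 0 then ⟨1, by rw [h]; decide⟩ else ⟨0, fun he => h he.symm⟩
  have hmv : Γ.mat c₁ v ≠ v ∧ Γ.mat c₁ v ≠ Γ.mat c v := ⟨Γ.nofix c₁ v, hpar hnc c₁ hc₁⟩
  have hmu : Γ.mat c₁ (Γ.mat c v) ≠ v ∧ Γ.mat c₁ (Γ.mat c v) ≠ Γ.mat c v :=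
    ⟨hpar' hnc c₁ hc₁, Γ.nofix c₁ (Γ.mat c v)⟩
  have hzv : ∀ z, z ≠ v → Γ.Conn c v z → z ≠ v ∧ z ≠ Γ.mat c v :=
    fun z h1 h2 => ⟨h1, fun he => hnc (he ▸ h2)⟩
  have hzu : ∀ z, z ≠ Γ.mat c v → Γ.Conn c (Γ.mat c v) z → z ≠ v ∧ z ≠ Γ.mat c v :=
    fun z h1 h2 => ⟨fun he => hnc (Γ.conn_symm (he ▸ h2)), h1⟩
  have hbridge : (compress hnc).mat c₁ ⟨Γ.mat c₁ v, hmv⟩ = ⟨Γ.mat c₁ (Γ.mat c v), hmu⟩ := by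
    apply Subtype.ext
    show cmat Γ c v c₁ (Γ.mat c₁ v) = Γ.mat c₁ (Γ.mat c v)
    unfold cmat
    rw [if_neg hc₁, if_pos (Γ.invol c₁ v)]
  have hbridge' : (compress hnc).mat c₁ ⟨Γ.mat c₁ (Γ.mat c v), hmu⟩ = ⟨Γ.mat c₁ v, hmv⟩ := by
    have h2 := congrArg ((compress hnc).mat c₁) hbridge
    rw [(compress hnc).invol] at h2
    exact h2.symm
  set ρ : V → {w : V // w ≠ v ∧ w ≠ Γ.mat c v} := fun x =>
    if hx : x = v then ⟨Γ.mat c₁ v, hmv⟩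
    else if hx' : x = Γ.mat c v then ⟨Γ.mat c₁ (Γ.mat c v), hmu⟩
    else ⟨x, hx, hx'⟩ with hρ
  have hρv : ρ v = ⟨Γ.mat c₁ v, hmv⟩ := by
    simp [hρ]
  have hρu : ρ (Γ.mat c v) = ⟨Γ.mat c₁ (Γ.mat c v), hmu⟩ := by
    simp [hρ, Γ.nofix c v]
  have hρo : ∀ x (h1 : x ≠ v) (h2 : x ≠ Γ.mat c v), ρ x = ⟨x, h1, h2⟩ := by
    intro x h1 h2
    simp only [hρ]
    rw [dif_neg h1, dif_neg h2]
  have hstep : ∀ x : V, ∀ c'' : Fin 3,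
      Relation.ReflTransGen (fun a b => ∃ c', (compress hnc).mat c' a = b)
        (ρ x) (ρ (Γ.mat c'' x)) := by
    intro x c''
    by_cases hxv : x = v
    · subst hxv
      by_cases hyu : Γ.mat c'' x = Γ.mat c x
      · rw [hρv, hyu, hρu]
        exact Relation.ReflTransGen.single ⟨c₁, hbridge⟩
      · have hyv : Γ.mat c'' x ≠ x := Γ.nofix c'' x
        have hcc : c'' ≠ c := fun he => hyu (by rw [he])
        rw [hρv, hρo _ hyv hyu]
        exact conn_around hnc x hzv hc₁ hcc hmv ⟨hyv, hyu⟩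
    · by_cases hxu : x = Γ.mat c v
      · subst hxu
        by_cases hyv : Γ.mat c'' (Γ.mat c v) = v
        · rw [hρu, hyv, hρv]
          exact Relation.ReflTransGen.single ⟨c₁, hbridge'⟩
        · have hyu : Γ.mat c'' (Γ.mat c v) ≠ Γ.mat c v := Γ.nofix c'' _
          have hcc : c'' ≠ c := fun he => hyv (by rw [he, Γ.invol])
          rw [hρu, hρo _ hyv hyu]
          exact conn_around hnc (Γ.mat c v) hzu hc₁ hcc hmu ⟨hyv, hyu⟩
      · by_cases hyv : Γ.mat c'' x = v
        · have hxeq : x = Γ.mat c'' v := by rw [← hyv, Γ.invol]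
          have hcc : c'' ≠ c := fun he => hxu (by rw [hxeq, he])
          have m1 : Γ.mat c'' v ≠ v := Γ.nofix c'' v
          have m2 : Γ.mat c'' v ≠ Γ.mat c v := hpar hnc c'' hcc
          rw [hρo x hxv hxu, hyv, hρv,
            show (⟨x, hxv, hxu⟩ : {w : V // w ≠ v ∧ w ≠ Γ.mat c v}) = ⟨Γ.mat c'' v, m1, m2⟩
              from Subtype.ext hxeq]
          exact conn_around hnc v hzv hcc hc₁ ⟨m1, m2⟩ hmv
        · by_cases hyu : Γ.mat c'' x = Γ.mat c v
          · have hxeq : x = Γ.mat c'' (Γ.mat c v) := by rw [← hyu, Γ.invol]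
            have hcc : c'' ≠ c := fun he => hxv (by rw [hxeq, he, Γ.invol])
            have m1 : Γ.mat c'' (Γ.mat c v) ≠ v := hpar' hnc c'' hcc
            have m2 : Γ.mat c'' (Γ.mat c v) ≠ Γ.mat c v := Γ.nofix c'' _
            rw [hρo x hxv hxu, hyu, hρu,
              show (⟨x, hxv, hxu⟩ : {w : V // w ≠ v ∧ w ≠ Γ.mat c v})
                  = ⟨Γ.mat c'' (Γ.mat c v), m1, m2⟩ from Subtype.ext hxeq]
            exact conn_around hnc (Γ.mat c v) hzu hcc hc₁ ⟨m1, m2⟩ hmu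
          · rw [hρo x hxv hxu, hρo _ hyv hyu]
            exact Relation.ReflTransGen.single
              ⟨c'', lift_step hnc c'' x ⟨hxv, hxu⟩ hyv hyu⟩
  refine ⟨⟨⟨Γ.mat c₁ v, hmv⟩⟩, fun a b => ?_⟩
  have hρid : ∀ w : {w : V // w ≠ v ∧ w ≠ Γ.mat c v}, ρ w.1 = w := by
    intro w
    rw [hρo w.1 w.2.1 w.2.2]
  have hmain : ∀ x y : V, Relation.ReflTransGen (fun a b => ∃ c0, Γ.mat c0 a = b) x y →
      Relation.ReflTransGen (fun a b => ∃ c', (compress hnc).mat c' a = b) (ρ x) (ρ y) := by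
    intro x y hr
    induction hr with
    | refl => exact .refl
    | tail hab hbc ih =>
      obtain ⟨c0, hc0⟩ := hbc
      exact ih.trans (hc0 ▸ hstep _ c0)
  have hfin := hmain a.1 b.1 (hΓ.2 a.1 b.1)
  rwa [hρid a, hρid b] at hfin

end Connectivity

/-- Transport a Tait graph along an equivalence of vertex sets. -/
def equivMap {W : Type} (e : V ≃ W) (Γ : TaitGraph V) : TaitGraph W where
  mat c w := e (Γ.mat c (e.symm w))
  invol c w := by simp [Γ.invol]
  nofix c w := fun he => Γ.nofix c (e.symm w) (by simpa using congrArg e.symm he)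

lemma equivMap_connected {W : Type} (e : V ≃ W) (Γ : TaitGraph V)
    (h : Γ.Connected) : (equivMap e Γ).Connected := by
  refine ⟨⟨e h.1.some⟩, fun x y => ?_⟩
  have h2 := Relation.ReflTransGen.lift (p := fun a b => ∃ c, (equivMap e Γ).mat c a = b) e
    (fun a b (hab : ∃ c, Γ.mat c a = b) => hab.imp (fun c hc => by simp [equivMap, hc])) _ _ (h.2 (e.symm x) (e.symm y))
  simpa [Function.onFun] using h2

lemma IsCompression.equivMap_right {W V' : Type} {Γ : TaitGraph V} {c : Fin 3} {v : V}
    {Γ' : TaitGraph V'} (h : Γ.IsCompression c v Γ') (e : V' ≃ W) :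
    Γ.IsCompression c v (equivMap e Γ') := by
  obtain ⟨φ, h1, h2⟩ := h
  refine ⟨e.symm.trans φ, fun w => ?_, fun c' hc' w => ?_⟩
  · simpa [equivMap] using h1 (e.symm w)
  · simpa [equivMap] using h2 c' hc' (e.symm w)

end TaitGraph

end AuxLemmas


/-- Every connected Tait-colored cubic graph can be reduced to a
1-patch graph (each pair of colors forming a single bi-colored cycle) by a finite
sequence of p-compressions (compressions along connecting edges). -/
theorem reduce_to_one_patch_by_p_compressions
    (X : TG) (hconn : X.2.Connected) :
    ∃ Y : TG, Relation.ReflTransGen PComp X Y ∧ Y.2.OnePatch := by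
  classical
  suffices H : ∀ n : ℕ, ∀ X : TG, X.1 = n → X.2.Connected →
      ∃ Y : TG, Relation.ReflTransGen PComp X Y ∧ Y.2.OnePatch by
    exact H X.1 X rfl hconn
  intro n
  induction n using Nat.strong_induction_on with
  | _ n ih =>
    intro X hXn hΓ
    by_cases hone : ∃ (c : Fin 3) (v : Fin X.1), ¬ X.2.Conn c v (X.2.mat c v)
    · obtain ⟨c, v, hnc⟩ := hone
      have hlt0 : Fintype.card {w : Fin X.1 // w ≠ v ∧ w ≠ X.2.mat c v} < X.1 := by
        have h2 := Fintype.card_subtype_lt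
          (p := fun w : Fin X.1 => w ≠ v ∧ w ≠ X.2.mat c v) (x := v) (by simp)
        simpa using h2
      set m := Fintype.card {w : Fin X.1 // w ≠ v ∧ w ≠ X.2.mat c v} with hm
      let e : {w : Fin X.1 // w ≠ v ∧ w ≠ X.2.mat c v} ≃ Fin m := Fintype.equivFin _
      have hlt : m < n := hXn ▸ hlt0
      set X' : TG := ⟨m, TaitGraph.equivMap e (TaitGraph.compress hnc)⟩ with hX'
      obtain ⟨Y, hY1, hY2⟩ := ih m hlt X' rfl
        (TaitGraph.equivMap_connected e _ (TaitGraph.compress_connected hnc hΓ))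
      refine ⟨Y, Relation.ReflTransGen.head ?_ hY1, hY2⟩
      exact ⟨c, v, hnc, (TaitGraph.compress_isCompression hnc).equivMap_right e⟩
    · push_neg at hone
      refine ⟨X, .refl, fun c => ?_⟩
      have hconnall : ∀ x y : Fin X.1, X.2.Conn c x y := by
        intro x y
        have hp := hΓ.2 x y
        induction hp with
        | refl => exact .refl
        | tail hab hbc ih2 =>
          obtain ⟨c'', hbc⟩ := hbc
          by_cases hcc : c'' = c
          · subst hcc
            exact ih2.trans (hbc ▸ hone c'' _)
          · exact ih2.tail ⟨c'', hcc, hbc⟩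
      have h1 : Subsingleton (Quot (X.2.Conn c)) := by
        constructor
        intro a b
        induction a using Quot.ind
        induction b using Quot.ind
        exact Quot.sound (hconnall _ _)
      have h2 : Nonempty (Quot (X.2.Conn c)) := ⟨Quot.mk _ hΓ.1.some⟩
      show Nat.card (Quot (X.2.Conn c)) = 1
      exact Nat.card_eq_one_iff_unique.mpr ⟨h1, h2⟩
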